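/- On the interval [0, π/(2f)), the functions u(x,y,t) = f y - τ x, v(x,y,t) = (τ x - f y) tan(ft), h(x,y,t) = h₀ e^{τt} sec(ft) satisfy the rotating shallow water equations with flat bottom: ∂u/∂t + u ∂u/∂x + v ∂u/∂y + (1/F²) ∂h/∂x - f v + τ u = 0, ∂v/∂t + u ∂v/∂x + v ∂v/∂y + (1/F²) ∂h/∂y + f u + τ v = 0, and ∂h/∂t + ∂(uh)/∂x + ∂(vh)/∂y = 0. -/

import Mathlib

noncomputable def u5 (f τ : ℝ) (x y t : ℝ) : ℝ := f * y - τ * x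
noncomputable def v5 (f τ : ℝ) (x y t : ℝ) : ℝ := (τ * x - f * y) * Real.tan (f * t)
noncomputable def h5 (f τ h0 : ℝ) (x y t : ℝ) : ℝ := h0 * Real.exp (τ * t) / Real.cos (f * t)

theorem stmt_5 (f τ F h0 : ℝ) (hf : 0 < f) (hτ : 0 ≤ τ) (hF : F ≠ 0) :
    ∀ x y : ℝ, ∀ t ∈ Set.Ico (0 : ℝ) (Real.pi / (2 * f)),
      (deriv (fun s => u5 f τ x y s) t
        + u5 f τ x y t * deriv (fun s => u5 f τ s y t) x
        + v5 f τ x y t * deriv (fun s => u5 f τ x s t) y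
        + (1 / F ^ 2) * deriv (fun s => h5 f τ h0 s y t) x
        - f * v5 f τ x y t + τ * u5 f τ x y t = 0) ∧
      (deriv (fun s => v5 f τ x y s) t
        + u5 f τ x y t * deriv (fun s => v5 f τ s y t) x
        + v5 f τ x y t * deriv (fun s => v5 f τ x s t) y
        + (1 / F ^ 2) * deriv (fun s => h5 f τ h0 x s t) y
        + f * u5 f τ x y t + τ * v5 f τ x y t = 0) ∧
      (deriv (fun s => h5 f τ h0 x y s) t
        + deriv (fun s => u5 f τ s y t * h5 f τ h0 s y t) x
        + deriv (fun s => v5 f τ x s t * h5 f τ h0 x s t) y = 0) := by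
  intro x y t ht
  obtain ⟨ht0, ht1⟩ := ht
  have hft : f * t < Real.pi / 2 := by
    have h := mul_lt_mul_of_pos_left ht1 hf
    have h2 : f * (Real.pi / (2 * f)) = Real.pi / 2 := by
      field_simp
    linarith [h2 ▸ h]
  have hcos : 0 < Real.cos (f * t) := by
    apply Real.cos_pos_of_mem_Ioo
    constructor
    · have := Real.pi_pos; nlinarith
    · exact hft
  have hcos' : Real.cos (f * t) ≠ 0 := ne_of_gt hcos
  -- derivatives in t
  have hdu_t : deriv (fun s => u5 f τ x y s) t = 0 := by
    simp [u5]
  have htan : HasDerivAt (fun s : ℝ => Real.tan (f * s))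
      (f / Real.cos (f * t) ^ 2) t := by
    have h1 : HasDerivAt (fun s : ℝ => f * s) f t := by
      simpa using (hasDerivAt_id t).const_mul f
    have h2 := (Real.hasDerivAt_tan hcos').comp t h1
    simpa [div_eq_mul_inv, mul_comm, Function.comp_def] using h2
  have hdv_t : deriv (fun s => v5 f τ x y s) t
      = (τ * x - f * y) * (f / Real.cos (f * t) ^ 2) := by
    have := (htan.const_mul (τ * x - f * y)).deriv
    simpa [v5] using this
  have hexp : HasDerivAt (fun s : ℝ => Real.exp (τ * s)) (τ * Real.exp (τ * t)) t := by
    have h1 : HasDerivAt (fun s : ℝ => τ * s) τ t := by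
      simpa using (hasDerivAt_id t).const_mul τ
    simpa [mul_comm, Function.comp_def] using (Real.hasDerivAt_exp (τ * t)).comp t h1
  have hcosd : HasDerivAt (fun s : ℝ => Real.cos (f * s)) (-(f * Real.sin (f * t))) t := by
    have h1 : HasDerivAt (fun s : ℝ => f * s) f t := by
      simpa using (hasDerivAt_id t).const_mul f
    have := (Real.hasDerivAt_cos (f * t)).comp t h1
    simpa [mul_comm, Function.comp_def] using this
  have hdh_t : deriv (fun s => h5 f τ h0 x y s) t
      = (h0 * (τ * Real.exp (τ * t)) * Real.cos (f * t)
        - h0 * Real.exp (τ * t) * (-(f * Real.sin (f * t)))) / Real.cos (f * t) ^ 2 := by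
    have := ((hexp.const_mul h0).div hcosd hcos').deriv
    simpa [h5, Pi.div_def] using this
  -- derivatives in x
  have hdu_x : deriv (fun s => u5 f τ s y t) x = -τ := by
    have : HasDerivAt (fun s : ℝ => f * y - τ * s) (-τ) x := by
      simpa [Pi.sub_def] using (hasDerivAt_const x (f*y)).sub ((hasDerivAt_id x).const_mul τ)
    simpa [u5] using this.deriv
  have hdv_x : deriv (fun s => v5 f τ s y t) x = τ * Real.tan (f * t) := by
    have : HasDerivAt (fun s : ℝ => (τ * s - f * y) * Real.tan (f * t))
        (τ * Real.tan (f * t)) x := by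
      have h1 : HasDerivAt (fun s : ℝ => τ * s - f * y) τ x := by
        simpa [Pi.sub_def] using ((hasDerivAt_id x).const_mul τ).sub (hasDerivAt_const x (f*y))
      simpa using h1.mul_const (Real.tan (f * t))
    simpa [v5] using this.deriv
  have hdh_x : deriv (fun s => h5 f τ h0 s y t) x = 0 := by
    simp [h5]
  -- derivatives in y
  have hdu_y : deriv (fun s => u5 f τ x s t) y = f := by
    have : HasDerivAt (fun s : ℝ => f * s - τ * x) f y := by
      simpa [Pi.sub_def] using ((hasDerivAt_id y).const_mul f).sub (hasDerivAt_const y (τ*x))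
    simpa [u5] using this.deriv
  have hdv_y : deriv (fun s => v5 f τ x s t) y = -f * Real.tan (f * t) := by
    have : HasDerivAt (fun s : ℝ => (τ * x - f * s) * Real.tan (f * t))
        (-f * Real.tan (f * t)) y := by
      have h1 : HasDerivAt (fun s : ℝ => τ * x - f * s) (-f) y := by
        simpa [Pi.sub_def] using (hasDerivAt_const y (τ*x)).sub ((hasDerivAt_id y).const_mul f)
      simpa using h1.mul_const (Real.tan (f * t))
    simpa [v5] using this.deriv
  have hdh_y : deriv (fun s => h5 f τ h0 x s t) y = 0 := by
    simp [h5]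
  -- derivatives of products
  have hduh_x : deriv (fun s => u5 f τ s y t * h5 f τ h0 s y t) x
      = -τ * (h0 * Real.exp (τ * t) / Real.cos (f * t)) := by
    have : HasDerivAt (fun s : ℝ => (f * y - τ * s) * (h0 * Real.exp (τ * t) / Real.cos (f * t)))
        (-τ * (h0 * Real.exp (τ * t) / Real.cos (f * t))) x := by
      have h1 : HasDerivAt (fun s : ℝ => f * y - τ * s) (-τ) x := by
        simpa [Pi.sub_def] using (hasDerivAt_const x (f*y)).sub ((hasDerivAt_id x).const_mul τ)
      simpa using h1.mul_const _
    simpa [u5, h5] using this.deriv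
  have hdvh_y : deriv (fun s => v5 f τ x s t * h5 f τ h0 x s t) y
      = -f * Real.tan (f * t) * (h0 * Real.exp (τ * t) / Real.cos (f * t)) := by
    have : HasDerivAt (fun s : ℝ => (τ * x - f * s) * Real.tan (f * t)
          * (h0 * Real.exp (τ * t) / Real.cos (f * t)))
        (-f * Real.tan (f * t) * (h0 * Real.exp (τ * t) / Real.cos (f * t))) y := by
      have h1 : HasDerivAt (fun s : ℝ => τ * x - f * s) (-f) y := by
        simpa [Pi.sub_def] using (hasDerivAt_const y (τ*x)).sub ((hasDerivAt_id y).const_mul f)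
      simpa [mul_assoc] using (h1.mul_const (Real.tan (f * t))).mul_const _
    simpa [v5, h5] using this.deriv
  refine ⟨?_, ?_, ?_⟩
  · rw [hdu_t, hdu_x, hdu_y, hdh_x]
    simp only [u5, v5]
    ring
  · rw [hdv_t, hdv_x, hdv_y, hdh_y]
    have hsec : f / Real.cos (f * t) ^ 2 = f * (1 + Real.tan (f * t) ^ 2) := by
      rw [div_eq_mul_inv, ← Real.inv_one_add_tan_sq hcos', inv_inv]
    rw [hsec]
    simp only [u5, v5]
    ring
  · rw [hdh_t, hduh_x, hdvh_y]
    rw [Real.tan_eq_sin_div_cos]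
    field_simp
    ring
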